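/- For the standard map f_λ(θ,r) = (θ + r + λ sin 2πθ, r + λ sin 2πθ): if the graph of a continuous ψ : 𝕋 → ℝ is invariant under f_λ, then g_λ(θ) := θ + λ sin 2πθ + ψ(θ) (mod 1) is an orientation-preserving homeomorphism of 𝕋 with inverse g_λ⁻¹(θ) = θ − ψ(θ), and consequently g_λ(θ) + g_λ⁻¹(θ) = 2θ + λ sin 2πθ. Hence if λ > 1/π, f_λ has no continuous invariant graph. -/

import Mathlib

open Real

/-- Standard family: if the graph of a continuous periodic `ψ` is invariant under
the standard map `f_λ` (invariance of the graph under `f_λ` and `f_λ⁻¹` expressed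
on lifts), then `g_λ(θ) = θ + λ sin 2πθ + ψ(θ)` is an increasing circle
homeomorphism lift with inverse `θ ↦ θ − ψ(θ)`, so
`g_λ(θ) + g_λ⁻¹(θ) = 2θ + λ sin 2πθ`; consequently no such `ψ` exists if
`λ > 1/π`. -/
theorem stmt9 (lam : ℝ) (ψ : ℝ → ℝ) (hψc : Continuous ψ)
    (hper : ∀ θ : ℝ, ψ (θ + 1) = ψ θ)
    (hinv1 : ∀ θ : ℝ, ψ (θ + ψ θ + lam * Real.sin (2 * π * θ)) =
      ψ θ + lam * Real.sin (2 * π * θ))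
    (hinv2 : ∀ θ : ℝ, ψ (θ - ψ θ) = ψ θ - lam * Real.sin (2 * π * (θ - ψ θ))) :
    Function.LeftInverse (fun θ => θ - ψ θ)
      (fun θ => θ + lam * Real.sin (2 * π * θ) + ψ θ) ∧
    Function.RightInverse (fun θ => θ - ψ θ)
      (fun θ => θ + lam * Real.sin (2 * π * θ) + ψ θ) ∧
    StrictMono (fun θ => θ + lam * Real.sin (2 * π * θ) + ψ θ) ∧
    (∀ θ : ℝ, (θ + lam * Real.sin (2 * π * θ) + ψ θ) + (θ - ψ θ) =
      2 * θ + lam * Real.sin (2 * π * θ)) ∧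
    (1 / π < lam → False) := by
  set g : ℝ → ℝ := fun θ => θ + lam * Real.sin (2 * π * θ) + ψ θ with hg
  set h : ℝ → ℝ := fun θ => θ - ψ θ with hh
  have hli : Function.LeftInverse h g := by
    intro θ
    have h1 := hinv1 θ
    have : g θ = θ + ψ θ + lam * Real.sin (2 * π * θ) := by simp [hg]; ring
    simp only [hh, this, h1]
    ring
  have hri : Function.RightInverse h g := by
    intro θ
    have h2 := hinv2 θ
    simp only [hg, hh, h2]
    ring
  have hgc : Continuous g := by
    apply Continuous.add
    · exact continuous_id.add (continuous_const.mul (Real.continuous_sin.comp (continuous_const.mul continuous_id)))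
    · exact hψc
  have hginj : Function.Injective g := hli.injective
  have hmono : StrictMono g := by
    rcases hgc.strictMono_of_inj hginj with hm | ha
    · exact hm
    · exfalso
      have h01 : g 1 < g 0 := ha zero_lt_one
      have : g 1 = 1 + ψ 0 := by
        simp [hg, mul_one, Real.sin_two_pi, hper 0, show (0:ℝ) + 1 = 1 by ring]
        rw [show (1:ℝ) = 0 + 1 by ring, hper 0]
      have h0 : g 0 = ψ 0 := by simp [hg]
      rw [this, h0] at h01
      linarith
  have hsum : ∀ θ : ℝ, g θ + h θ = 2 * θ + lam * Real.sin (2 * π * θ) := by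
    intro θ; simp only [hg, hh]; ring
  refine ⟨hli, hri, hmono, hsum, ?_⟩
  intro hlam
  have hπ : (0:ℝ) < π := Real.pi_pos
  have hlam0 : 0 < lam := lt_trans (by positivity) hlam
  -- h is also strictly monotone
  have hhmono : StrictMono h := by
    intro a b hab
    have : g (h a) < g (h b) := by rw [hri a, hri b]; exact hab
    exact hmono.lt_iff_lt.mp this
  have hF : StrictMono (fun θ : ℝ => 2 * θ + lam * Real.sin (2 * π * θ)) := by
    have := hmono.add hhmono
    convert this using 1
    funext θ
    exact (hsum θ).symm
  -- choose x small with sin x > x / (π * lam)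
  set ε : ℝ := 1 - 1 / (π * lam) with hε
  have hεpos : 0 < ε := by
    have : 1 / (π * lam) < 1 := by
      rw [div_lt_one (by positivity)]
      calc (1:ℝ) = π * (1/π) := by field_simp
      _ < π * lam := by exact mul_lt_mul_of_pos_left hlam hπ
    simp only [hε]
    linarith
  set x : ℝ := min 1 (Real.sqrt ε) with hx
  have hxpos : 0 < x := lt_min one_pos (Real.sqrt_pos.mpr hεpos)
  have hxle1 : x ≤ 1 := min_le_left _ _
  clear_value x ε
  have hsin : x / (π * lam) ≤ x - x ^ 3 / 4 := by
    have hx2 : x ^ 2 ≤ ε := by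
      have : x ≤ Real.sqrt ε := hx ▸ min_le_right _ _
      calc x ^ 2 ≤ (Real.sqrt ε) ^ 2 := by
            exact pow_le_pow_left₀ hxpos.le this 2
        _ = ε := Real.sq_sqrt hεpos.le
    have key : 1 / (π * lam) ≤ 1 - x ^ 2 / 4 := by
      have h4 : x ^ 2 / 4 ≤ ε := by nlinarith [sq_nonneg x, hx2]
      simp only [hε] at h4
      linarith
    calc x / (π * lam) = x * (1 / (π * lam)) := by ring
      _ ≤ x * (1 - x ^ 2 / 4) := by
          exact mul_le_mul_of_nonneg_left key hxpos.le
      _ = x - x ^ 3 / 4 := by ring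
  have hsin2 : x - x ^ 3 / 4 < Real.sin x := by
    have := Real.sin_gt_sub_cube hxpos; linarith [pow_pos hxpos 3]
  -- set t = x / (2π)
  set t : ℝ := x / (2 * π) with ht
  have htpos : 0 < t := by positivity
  have hlt : (1/2 : ℝ) - t < 1/2 + t := by linarith
  have hFlt := hF hlt
  simp only at hFlt
  have h2πt : 2 * π * t = x := by rw [ht]; field_simp
  have e1 : 2 * π * (1/2 - t) = π - x := by linear_combination (-1 : ℝ) * h2πt
  have e2 : 2 * π * (1/2 + t) = x + π := by linear_combination h2πt
  rw [e1, e2, Real.sin_pi_sub, Real.sin_add_pi] at hFlt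
  -- hFlt : 2 * (1/2 - t) + lam * sin x < 2 * (1/2 + t) + lam * (- sin x)
  have : lam * Real.sin x < 2 * t := by linarith
  have h2t : 2 * t = x / π := by rw [ht]; field_simp
  rw [h2t] at this
  have : Real.sin x < x / (π * lam) := by
    rw [lt_div_iff₀ (by positivity)]
    calc Real.sin x * (π * lam) = lam * Real.sin x * π := by ring
      _ < x / π * π := by exact mul_lt_mul_of_pos_right this hπ
      _ = x := by field_simp
  linarith
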